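/- The Space KAM evaluates the consuming scrolling algorithm in logarithmic space: for every binary string s ∈ {0,1}*, the Space KAM run from the initial state (toy ⟨s⟩, ε, ε) is complete, ends in the state (I, ε, ε), and its space is Θ(log |s|): there are constants k1, k2 > 0 independent of s such that the space is at most k2·(log|s| + 1) for all s, and at least k1·log|s| for all s with |s| ≥ 2. -/

import Mathlib

set_option autoImplicit false

/-! λ-terms with variable names in ℕ. -/
inductive Term : Type
  | var : ℕ → Term
  | lam : ℕ → Term → Term
  | app : Term → Term → Term
deriving DecidableEq

namespace Term

/-- Free variables. -/
def fv : Term → Finset ℕ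
  | var x => {x}
  | lam x t => fv t \ {x}
  | app t u => fv t ∪ fv u

/-- A term is closed if it has no free variables. -/
def closed (t : Term) : Prop := t.fv = ∅

/-- Substitution of `u` for the free occurrences of `x`; it is capture-avoiding
whenever the substituted term `u` is closed, which is the only case arising in
Closed Call-by-Name. -/
def subst (x : ℕ) (u : Term) : Term → Term
  | var y => if y = x then u else var y
  | lam y t => if y = x then lam y t else lam y (subst x u t)
  | app t r => app (subst x u t) (subst x u r)

/-- In-order (left-to-right) enumeration of the constructors (as subterm occurrences). -/
def inorder : Term → List Term
  | var x => [var x]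
  | lam x t => lam x t :: inorder t
  | app t u => inorder t ++ app t u :: inorder u

/-- Membership in the deterministic λ-calculus `Λdet`: the right subterm of every
application is a variable or an abstraction. -/
def IsDet : Term → Prop
  | var _ => True
  | lam _ t => IsDet t
  | app t u => IsDet t ∧ IsDet u ∧ ((∃ x, u = var x) ∨ ∃ x r, u = lam x r)

end Term

/-- Weak head reduction: `(λx.t) u r1 … rh →wh t{x:=u} r1 … rh`. -/
inductive Whr : Term → Term → Prop
  | beta (x : ℕ) (t u : Term) : Whr (Term.app (Term.lam x t) u) (Term.subst x u t)
  | appL {t t' : Term} (u : Term) : Whr t t' → Whr (Term.app t u) (Term.app t' u)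

def WhNormal (t : Term) : Prop := ∀ u, ¬ Whr t u

/-- `NSteps R n a b`: exactly `n` `R`-steps from `a` to `b`. -/
inductive NSteps {α : Type _} (R : α → α → Prop) : ℕ → α → α → Prop
  | refl (a : α) : NSteps R 0 a a
  | head {a b c : α} {n : ℕ} : R a b → NSteps R n b c → NSteps R (n + 1) a c

/-! Closures and (local) environments. -/
mutual
  inductive Clo : Type
    | mk : Term → Env → Clo
  inductive Env : Type
    | nil : Env
    | cons : ℕ → Clo → Env → Env
end

def Env.lookup : Env → ℕ → Option Clo
  | .nil, _ => none
  | .cons y c e, x => if y = x then some c else Env.lookup e x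

def Env.dom : Env → Finset ℕ
  | .nil => ∅
  | .cons x _ e => insert x (Env.dom e)

/-- Restriction `e|s` of an environment to a set of variables. -/
def Env.restrict : Env → Finset ℕ → Env
  | .nil, _ => .nil
  | .cons x c e, s => if x ∈ s then .cons x c (Env.restrict e s) else Env.restrict e s

mutual
  /-- Decoding of a closure into a λ-term. -/
  def Clo.decode : Clo → Term
    | .mk t e => Env.decode t e
  /-- Decoding: `(t, ε)↓ = t`, `(t, [x←c]·e)↓ = (t{x:=c↓}, e)↓`. -/
  def Env.decode : Term → Env → Term
    | t, .nil => t
    | t, .cons x c e => Env.decode (Term.subst x (Clo.decode c) t) e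
end

mutual
  /-- Hereditary number of closures in a closure (without sharing). -/
  def Clo.count : Clo → ℕ
    | .mk _ e => 1 + Env.count e
  def Env.count : Env → ℕ
    | .nil => 0
    | .cons _ c e => Clo.count c + Env.count e
end

mutual
  /-- A closure `(t,e)` is closed: `fv t ⊆ dom e` and hereditarily so. -/
  def Clo.Closed : Clo → Prop
    | .mk t e => t.fv ⊆ e.dom ∧ Env.ClosedE e
  def Env.ClosedE : Env → Prop
    | .nil => True
    | .cons _ c e => Clo.Closed c ∧ Env.ClosedE e
end

mutual
  /-- Environment domain invariant: `dom e = fv t`, hereditarily. -/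
  def Clo.DomInv : Clo → Prop
    | .mk t e => e.dom = t.fv ∧ Env.DomInvE e
  def Env.DomInvE : Env → Prop
    | .nil => True
    | .cons _ c e => Clo.DomInv c ∧ Env.DomInvE e
end

/-- Size of the left address of (the first occurrence of) `u` in the code `t0`:
the binary length of its index in the in-order enumeration of the constructors of `t0`. -/
def addrSize (t0 u : Term) : ℕ := Nat.size (t0.inorder.idxOf u)

mutual
  /-- Size of a closure, relative to the initial code `t0`. -/
  def Clo.size : Term → Clo → ℕ
    | t0, .mk u e => addrSize t0 u + Env.sizeE t0 e
  /-- Size of an environment, relative to the initial code `t0`. -/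
  def Env.sizeE : Term → Env → ℕ
    | _, .nil => 0
    | t0, .cons x c e => addrSize t0 (Term.var x) + Clo.size t0 c + Env.sizeE t0 e
end

def stackSize (t0 : Term) (S : List Clo) : ℕ := (S.map (Clo.size t0)).sum

/-- States of the (Naive/Space) KAM. -/
structure State where
  tm : Term
  env : Env
  stk : List Clo

/-- Size of a state, relative to the initial code `t0`. -/
def State.size (t0 : Term) (s : State) : ℕ :=
  addrSize t0 s.tm + Env.sizeE t0 s.env + stackSize t0 s.stk

/-- Closure count of a state: total number of closures occurring in it,
hereditarily and without sharing (the active term/environment pair is a closure). -/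
def State.count (s : State) : ℕ :=
  1 + Env.count s.env + (s.stk.map Clo.count).sum

def State.decode (s : State) : Term :=
  s.stk.foldl (fun a c => Term.app a c.decode) (Env.decode s.tm s.env)

def initState (t : Term) : State := ⟨t, .nil, []⟩

/-! The Naive KAM. -/
inductive NK : State → State → Prop
  | sea (t u : Term) (e : Env) (S : List Clo) :
      NK ⟨.app t u, e, S⟩ ⟨t, e, .mk u e :: S⟩
  | beta (x : ℕ) (t : Term) (e : Env) (c : Clo) (S : List Clo) :
      NK ⟨.lam x t, e, c :: S⟩ ⟨t, .cons x c e, S⟩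
  | sub {x : ℕ} {e : Env} {u : Term} {e' : Env} (S : List Clo) :
      Env.lookup e x = some (.mk u e') → NK ⟨.var x, e, S⟩ ⟨u, e', S⟩

def NKFinal (s : State) : Prop := ∀ s', ¬ NK s s'

/-- Naive KAM runs counting the number of β-transitions. -/
inductive NKRun : ℕ → State → State → Prop
  | refl (s : State) : NKRun 0 s s
  | sea {t u : Term} {e : Env} {S : List Clo} {s' : State} {n : ℕ} :
      NKRun n ⟨t, e, .mk u e :: S⟩ s' → NKRun n ⟨.app t u, e, S⟩ s'
  | beta {x : ℕ} {t : Term} {e : Env} {c : Clo} {S : List Clo} {s' : State} {n : ℕ} :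
      NKRun n ⟨t, .cons x c e, S⟩ s' → NKRun (n + 1) ⟨.lam x t, e, c :: S⟩ s'
  | sub {x : ℕ} {e : Env} {u : Term} {e' : Env} {S : List Clo} {s' : State} {n : ℕ} :
      Env.lookup e x = some (.mk u e') → NKRun n ⟨u, e', S⟩ s' → NKRun n ⟨.var x, e, S⟩ s'

/-! The Space KAM. -/
inductive SK : State → State → Prop
  | seav {t : Term} {x : ℕ} {e : Env} {c : Clo} (S : List Clo) :
      Env.lookup e x = some c →
      SK ⟨.app t (.var x), e, S⟩ ⟨t, e.restrict t.fv, c :: S⟩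
  | seanv {t u : Term} {e : Env} (S : List Clo) :
      (∀ x, u ≠ .var x) →
      SK ⟨.app t u, e, S⟩ ⟨t, e.restrict t.fv, .mk u (e.restrict u.fv) :: S⟩
  | betaw {x : ℕ} {t : Term} {e : Env} (c : Clo) (S : List Clo) :
      x ∉ t.fv → SK ⟨.lam x t, e, c :: S⟩ ⟨t, e, S⟩
  | betanw {x : ℕ} {t : Term} {e : Env} (c : Clo) (S : List Clo) :
      x ∈ t.fv → SK ⟨.lam x t, e, c :: S⟩ ⟨t, .cons x c e, S⟩
  | sub {x : ℕ} {e : Env} {u : Term} {e' : Env} (S : List Clo) :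
      Env.lookup e x = some (.mk u e') → SK ⟨.var x, e, S⟩ ⟨u, e', S⟩

def SKFinal (s : State) : Prop := ∀ s', ¬ SK s s'

/-- Space KAM runs counting the number of β-transitions (`→βw` and `→β¬w`). -/
inductive SKRun : ℕ → State → State → Prop
  | refl (s : State) : SKRun 0 s s
  | seav {t : Term} {x : ℕ} {e : Env} {c : Clo} {S : List Clo} {s' : State} {n : ℕ} :
      Env.lookup e x = some c →
      SKRun n ⟨t, e.restrict t.fv, c :: S⟩ s' → SKRun n ⟨.app t (.var x), e, S⟩ s'
  | seanv {t u : Term} {e : Env} {S : List Clo} {s' : State} {n : ℕ} :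
      (∀ x, u ≠ .var x) →
      SKRun n ⟨t, e.restrict t.fv, .mk u (e.restrict u.fv) :: S⟩ s' →
      SKRun n ⟨.app t u, e, S⟩ s'
  | betaw {x : ℕ} {t : Term} {e : Env} {c : Clo} {S : List Clo} {s' : State} {n : ℕ} :
      x ∉ t.fv → SKRun n ⟨t, e, S⟩ s' → SKRun (n + 1) ⟨.lam x t, e, c :: S⟩ s'
  | betanw {x : ℕ} {t : Term} {e : Env} {c : Clo} {S : List Clo} {s' : State} {n : ℕ} :
      x ∈ t.fv → SKRun n ⟨t, .cons x c e, S⟩ s' → SKRun (n + 1) ⟨.lam x t, e, c :: S⟩ s'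
  | sub {x : ℕ} {e : Env} {u : Term} {e' : Env} {S : List Clo} {s' : State} {n : ℕ} :
      Env.lookup e x = some (.mk u e') → SKRun n ⟨u, e', S⟩ s' → SKRun n ⟨.var x, e, S⟩ s'

/-! Concrete combinators. -/

/-- I := λx.x -/
def tmI : Term := .lam 0 (.var 0)
/-- θ := λx.λy.y (x x y)  (variables: x := 0, y := 1) -/
def tmTheta : Term := .lam 0 (.lam 1 (.app (.var 1) (.app (.app (.var 0) (.var 0)) (.var 1))))
/-- fix := θ θ -/
def tmFix : Term := .app tmTheta tmTheta
/-- x x y -/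
def xxy : Term := .app (.app (.var 0) (.var 0)) (.var 1)
/-- toyaux := λf.λz. z f f I  (f := 3, z := 2) -/
def tmToyaux : Term := .lam 3 (.lam 2 (.app (.app (.app (.var 2) (.var 3)) (.var 3)) tmI))
/-- toy := fix toyaux -/
def tmToy : Term := .app tmFix tmToyaux

/-- Scott encoding of binary strings (false = 0, true = 1; x0 := 4, x1 := 5, xε := 6):
`⟨ε⟩ := λx0.λx1.λxε.xε`, `⟨b·r⟩ := λx0.λx1.λxε.xb ⟨r⟩`. -/
def encStr : List Bool → Term
  | [] => .lam 4 (.lam 5 (.lam 6 (.var 6)))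
  | b :: r => .lam 4 (.lam 5 (.lam 6 (.app (.var (if b then 5 else 4)) (encStr r))))

/-- A variable fresh for `t`. -/
def freshVar (t : Term) : ℕ := t.fv.sup id + 1

/-- η-expansion: `η(t) := λx. t x` with `x ∉ fv t`. -/
def Term.eta (t : Term) : Term := .lam (freshVar t) (.app t (.var (freshVar t)))

/-- n-fold η-expansion. -/
def etaN (n : ℕ) (t : Term) : Term := Term.eta^[n] t

/-! Environment families for the Naive KAM scrolling invariant
(variables: x := 0, y := 1, z := 2, f := 3, x0 := 4, x1 := 5, xε := 6). -/

/-- `e0 := [x←(θ,ε)]·[y←(toyaux,ε)]`, `e(i+1) := [x←(x,ei)]·[y←(y,ei)]`. -/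
def eE : ℕ → Env
  | 0 => .cons 0 (.mk tmTheta .nil) (.cons 1 (.mk tmToyaux .nil) .nil)
  | i + 1 => .cons 0 (.mk (.var 0) (eE i)) (.cons 1 (.mk (.var 1) (eE i)) .nil)

/-- `e″0 := ε`, `e″(i+1) := [xε←(I,e′i)]·[x1←(f,e′i)]·[x0←(f,e′i)]·e″i`
(with `e′i` inlined). -/
def eDD (s : List Bool) : ℕ → Env
  | 0 => .nil
  | i + 1 =>
    let ep : Env := .cons 2 (.mk (encStr (s.drop i)) (eDD s i)) (.cons 3 (.mk xxy (eE i)) .nil)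
    .cons 6 (.mk tmI ep) (.cons 5 (.mk (.var 3) ep) (.cons 4 (.mk (.var 3) ep) (eDD s i)))

/-- `e′i := [z←(⟨b(i+1)⋯bn⟩, e″i)]·[f←(x x y, ei)]`. -/
def eP (s : List Bool) (i : ℕ) : Env :=
  .cons 2 (.mk (encStr (s.drop i)) (eDD s i)) (.cons 3 (.mk xxy (eE i)) .nil)

/-! The family `tn` for the abstract-time overhead explosion
(variables `xi := i`). -/

/-- `x0 x1 ⋯ xn`. -/
def varsApp : ℕ → Term
  | 0 => .var 0
  | n + 1 => .app (varsApp n) (.var (n + 1))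

/-- Term component of `Sn`: `x0 x0` for `n = 0`, `x0 ⋯ xn` for `n ≥ 1`. -/
def sTerm : ℕ → Term
  | 0 => .app (.var 0) (.var 0)
  | n + 1 => varsApp (n + 1)

/-- `e0 := [x0←(I,ε)]`, `e(n+1) := [x(n+1)←Sn]·en`. -/
def eN : ℕ → Env
  | 0 => .cons 0 (.mk tmI .nil) .nil
  | n + 1 => .cons (n + 1) (.mk (sTerm n) (eN n)) (eN n)

/-- `Sn := (sTerm n, en)`. -/
def sClo (n : ℕ) : Clo := .mk (sTerm n) (eN n)

/-- `Ci⟨t⟩ := λxi. t (x0 ⋯ xi)` (with `C0⟨t⟩ = λx0. t (x0 x0)`). -/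
def cPlug (i : ℕ) (t : Term) : Term := .lam i (.app t (sTerm i))

/-- `C0⟨C1⟨⋯Cn⟨t⟩⋯⟩⟩`. -/
def nest (n : ℕ) (t : Term) : Term := (List.range (n + 1)).foldr cPlug t

/-- `tn := C0⟨C1⟨⋯Cn⟨λy.I⟩⋯⟩⟩ I`. -/
def tN (n : ℕ) : Term := .app (nest n (.lam 1 tmI)) tmI

/-! Global-copy scrolling terms (s′ := 7, z := 2, x := 0, f := 3). -/

/-- `λf.λs′. s′ f f z` (free variable z). -/
def tScroll : Term :=
  .lam 3 (.lam 7 (.app (.app (.app (.var 7) (.var 3)) (.var 3)) (.var 2)))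

/-- `glCpy := λx.( fix (λf.λs′. s′ f f x) ) x`. -/
def glCpy : Term :=
  .lam 0 (.app (.app tmFix
    (.lam 3 (.lam 7 (.app (.app (.app (.var 7) (.var 3)) (.var 3)) (.var 0)))))
    (.var 0))

/-! The Space LAM. -/

structure LState where
  dump : List (Clo × List Clo)
  tm : Term
  env : Env
  stk : List Clo

inductive LAM : LState → LState → Prop
  | sea {D : List (Clo × List Clo)} {t u : Term} {e : Env} {S : List Clo} :
      LAM ⟨D, .app t u, e, S⟩ ⟨(.mk t (e.restrict t.fv), S) :: D, u, e.restrict u.fv, []⟩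
  | ret {D : List (Clo × List Clo)} {u : Term} {e' : Env} {S : List Clo}
      {x : ℕ} {t : Term} {e : Env} :
      LAM ⟨(.mk u e', S) :: D, .lam x t, e, []⟩ ⟨D, u, e', .mk (.lam x t) e :: S⟩
  | betaw {D : List (Clo × List Clo)} {x : ℕ} {t : Term} {e : Env} {c : Clo} {S : List Clo} :
      x ∉ t.fv → LAM ⟨D, .lam x t, e, c :: S⟩ ⟨D, t, e, S⟩
  | betanw {D : List (Clo × List Clo)} {x : ℕ} {t : Term} {e : Env} {c : Clo} {S : List Clo} :
      x ∈ t.fv → LAM ⟨D, .lam x t, e, c :: S⟩ ⟨D, t, .cons x c e, S⟩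
  | sub {D : List (Clo × List Clo)} {x : ℕ} {e : Env} {u : Term} {e' : Env} {S : List Clo} :
      Env.lookup e x = some (.mk u e') → LAM ⟨D, .var x, e, S⟩ ⟨D, u, e', S⟩

def LFinal (ls : LState) : Prop := ∀ ls', ¬ LAM ls ls'

/-- The Space KAM state `(t,e,S)` seen as the Space LAM state `(ε,t,e,S)`. -/
def embed (s : State) : LState := ⟨[], s.tm, s.env, s.stk⟩

def lInit (t : Term) : LState := ⟨[], t, .nil, []⟩

def LState.size (t0 : Term) (ls : LState) : ℕ :=
  (ls.dump.map (fun p => Clo.size t0 p.1 + stackSize t0 p.2)).sum +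
    addrSize t0 ls.tm + Env.sizeE t0 ls.env + stackSize t0 ls.stk

/-- A LAM-sequence from `a` whose first state with empty dump after `a` is its target. -/
inductive LRunToEmpty : LState → LState → Prop
  | single {a b : LState} : LAM a b → b.dump = [] → LRunToEmpty a b
  | cons {a b c : LState} : LAM a b → b.dump ≠ [] → LRunToEmpty b c → LRunToEmpty a c

/-! Log-sensitive Turing machines. -/

/-- Input-tape alphabet {0, 1, L, R}. -/
inductive ISym : Type | zero | one | lend | rend
deriving DecidableEq

/-- Work-tape alphabet {0, 1, □}. -/
inductive WSym : Type | zero | one | blank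
deriving DecidableEq

/-- Head moves. -/
inductive Move : Type | L | R | N
deriving DecidableEq

/-- A log-sensitive Turing machine: states `Fin n`, initial state, final states
`qtrue = s1` and `qfalse = s0`, and a deterministic transition function reading the
current state and the two scanned symbols, writing on the work tape, moving both
heads, and changing state (`none` = halt). -/
structure TM where
  n : ℕ
  start : Fin n
  qtrue : Fin n
  qfalse : Fin n
  δ : Fin n → ISym → WSym → Option (Fin n × WSym × Move × Move)

/-- A configuration: state, input-head position (on the tape `L i R`), and the
work tape split as (left part, reversed) / scanned symbol / (right part). -/
structure Config (M : TM) where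
  q : Fin M.n
  ipos : ℕ
  wl : List WSym
  wcur : WSym
  wr : List WSym

/-- The symbol of the input tape `L i R` at a given position. -/
def inputAt (i : List Bool) (p : ℕ) : ISym :=
  if p = 0 then .lend
  else if h : p - 1 < i.length then (if i.get ⟨p - 1, h⟩ then .one else .zero)
  else .rend

def moveIpos (p : ℕ) : Move → ℕ
  | .L => p - 1
  | .R => p + 1
  | .N => p

def moveWork (wl : List WSym) (c : WSym) (wr : List WSym) : Move → List WSym × WSym × List WSym
  | .L => match wl with
    | [] => ([], .blank, c :: wr)
    | a :: l => (l, a, c :: wr)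
  | .R => match wr with
    | [] => (c :: wl, .blank, [])
    | a :: r => (c :: wl, a, r)
  | .N => (wl, c, wr)

/-- One transition of the TM `M` on input `i`. -/
def TMStep (M : TM) (i : List Bool) (c c' : Config M) : Prop :=
  ∃ q' w mi mw, M.δ c.q (inputAt i c.ipos) c.wcur = some (q', w, mi, mw) ∧
    c'.q = q' ∧ c'.ipos = moveIpos c.ipos mi ∧
    (c'.wl, c'.wcur, c'.wr) = moveWork c.wl w c.wr mw

def initConfig (M : TM) : Config M := ⟨M.start, 0, [], .blank, []⟩

/-- Number of work-tape cells used by a configuration. -/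
def Config.workSize {M : TM} (c : Config M) : ℕ := c.wl.length + 1 + c.wr.length

def TMFinal (M : TM) (i : List Bool) (c : Config M) : Prop := ∀ c', ¬ TMStep M i c c'

/-- `⟨1⟩ := λx.λy.x` and `⟨0⟩ := λx.λy.y`. -/
def encBool (b : Bool) : Term :=
  if b then .lam 0 (.lam 1 (.var 0)) else .lam 0 (.lam 1 (.var 1))

/-! ### Auxiliary development -/

lemma fv_encStr (r : List Bool) : (encStr r).fv = ∅ := by
  induction r with
  | nil => decide
  | cons b r ih => cases b <;> simp [encStr, Term.fv, ih] <;> decide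

lemma encStr_ne_var (r : List Bool) (x : ℕ) : encStr r ≠ .var x := by
  cases r <;> simp [encStr]

lemma SK_eq {a b b' : State} (h : SK a b') (e : b' = b) : SK a b := e ▸ h

/-- Closures appearing in the run. -/
def cTh : Clo := .mk tmTheta .nil
def cA : Clo := .mk tmToyaux .nil
def eTh : Env := .cons 0 cTh .nil
def envA : Env := .cons 1 cA eTh
def cX : Clo := .mk xxy envA
def cI : Clo := .mk tmI .nil
def cS (r : List Bool) : Clo := .mk (encStr r) .nil
def eX : Env := .cons 3 cX .nil
def e2 (r : List Bool) : Env := .cons 2 (cS r) eX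
def e4 : Env := .cons 4 cX .nil
def e5 : Env := .cons 5 cX .nil

def body9 : Term := .app (.app (.app (.var 2) (.var 3)) (.var 3)) tmI

/-- States of the run. -/
def st1 (r : List Bool) : State := ⟨.app tmToy (encStr r), .nil, []⟩
def st2 (r : List Bool) : State := ⟨tmToy, .nil, [cS r]⟩
def st3 (r : List Bool) : State := ⟨tmFix, .nil, [cA, cS r]⟩
def st4 (r : List Bool) : State := ⟨tmTheta, .nil, [cTh, cA, cS r]⟩
def st5 (r : List Bool) : State := ⟨.lam 1 (.app (.var 1) xxy), eTh, [cA, cS r]⟩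
def st6 (r : List Bool) : State := ⟨.app (.var 1) xxy, envA, [cS r]⟩
def st7 (r : List Bool) : State := ⟨.var 1, .cons 1 cA .nil, [cX, cS r]⟩
def st8 (r : List Bool) : State := ⟨tmToyaux, .nil, [cX, cS r]⟩
def st9 (r : List Bool) : State := ⟨.lam 2 body9, eX, [cS r]⟩
def st10 (r : List Bool) : State := ⟨body9, e2 r, []⟩
def st11 (r : List Bool) : State := ⟨.app (.app (.var 2) (.var 3)) (.var 3), e2 r, [cI]⟩
def st12 (r : List Bool) : State := ⟨.app (.var 2) (.var 3), e2 r, [cX, cI]⟩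
def st13 (r : List Bool) : State := ⟨.var 2, .cons 2 (cS r) .nil, [cX, cX, cI]⟩
def st14 (r : List Bool) : State := ⟨encStr r, .nil, [cX, cX, cI]⟩
def st15 : State := ⟨.lam 5 (.lam 6 (.var 6)), .nil, [cX, cI]⟩
def st16 : State := ⟨.lam 6 (.var 6), .nil, [cI]⟩
def st17 : State := ⟨.var 6, .cons 6 cI .nil, []⟩
def stFin : State := ⟨tmI, .nil, []⟩
def stF1 (r : List Bool) : State := ⟨.lam 5 (.lam 6 (.app (.var 4) (encStr r))), e4, [cX, cI]⟩
def stF2 (r : List Bool) : State := ⟨.lam 6 (.app (.var 4) (encStr r)), e4, [cI]⟩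
def stF3 (r : List Bool) : State := ⟨.app (.var 4) (encStr r), e4, []⟩
def stF4 (r : List Bool) : State := ⟨.var 4, e4, [cS r]⟩
def stT1 (r : List Bool) : State := ⟨.lam 5 (.lam 6 (.app (.var 5) (encStr r))), .nil, [cX, cI]⟩
def stT2 (r : List Bool) : State := ⟨.lam 6 (.app (.var 5) (encStr r)), e5, [cI]⟩
def stT3 (r : List Bool) : State := ⟨.app (.var 5) (encStr r), e5, []⟩
def stT4 (r : List Bool) : State := ⟨.var 5, e5, [cS r]⟩
def st23 (r : List Bool) : State := ⟨xxy, envA, [cS r]⟩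
def st24 (r : List Bool) : State := ⟨.app (.var 0) (.var 0), eTh, [cA, cS r]⟩
def st25 (r : List Bool) : State := ⟨.var 0, eTh, [cTh, cA, cS r]⟩

/-! ### Single-step lemmas -/

lemma step12 (r : List Bool) : SK (st1 r) (st2 r) := by
  refine SK_eq (SK.seanv (t := tmToy) (u := encStr r) (e := .nil) []
    (fun x => encStr_ne_var r x)) ?_
  simp [st2, cS, Env.restrict]

lemma step23 (r : List Bool) : SK (st2 r) (st3 r) := by
  refine SK_eq (SK.seanv (t := tmFix) (u := tmToyaux) (e := .nil) [cS r]
    (by intro x h; simp [tmToyaux] at h)) ?_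
  simp [st3, cA, Env.restrict]

lemma step34 (r : List Bool) : SK (st3 r) (st4 r) := by
  refine SK_eq (SK.seanv (t := tmTheta) (u := tmTheta) (e := .nil) [cA, cS r]
    (by intro x h; simp [tmTheta] at h)) ?_
  simp [st4, cTh, Env.restrict]

lemma step45 (r : List Bool) : SK (st4 r) (st5 r) :=
  SK.betanw (x := 0) (t := .lam 1 (.app (.var 1) xxy)) (e := .nil) cTh [cA, cS r] (by decide)

lemma step56 (r : List Bool) : SK (st5 r) (st6 r) :=
  SK.betanw (x := 1) (t := .app (.var 1) xxy) (e := eTh) cA [cS r] (by decide)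

lemma step67 (r : List Bool) : SK (st6 r) (st7 r) := by
  refine SK_eq (SK.seanv (t := .var 1) (u := xxy) (e := envA) [cS r]
    (by intro x h; simp [xxy] at h)) ?_
  simp [st7, envA, eTh, cX, Env.restrict, Term.fv, xxy]

lemma step78 (r : List Bool) : SK (st7 r) (st8 r) :=
  SK.sub (x := 1) (e := .cons 1 cA .nil) [cX, cS r] rfl

lemma step89 (r : List Bool) : SK (st8 r) (st9 r) :=
  SK.betanw (x := 3) (t := .lam 2 body9) (e := .nil) cX [cS r] (by decide)

lemma step910 (r : List Bool) : SK (st9 r) (st10 r) :=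
  SK.betanw (x := 2) (t := body9) (e := eX) (cS r) [] (by decide)

lemma step1011 (r : List Bool) : SK (st10 r) (st11 r) := by
  refine SK_eq (SK.seanv (t := .app (.app (.var 2) (.var 3)) (.var 3)) (u := tmI)
    (e := e2 r) [] (by intro x h; simp [tmI] at h)) ?_
  simp [st11, e2, eX, cI, Env.restrict, Term.fv, tmI]

lemma step1112 (r : List Bool) : SK (st11 r) (st12 r) := by
  refine SK_eq (SK.seav (t := .app (.var 2) (.var 3)) (x := 3) (e := e2 r) (c := cX)
    [cI] (by simp [e2, eX, Env.lookup])) ?_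
  simp [st12, e2, eX, Env.restrict, Term.fv]

lemma step1213 (r : List Bool) : SK (st12 r) (st13 r) := by
  refine SK_eq (SK.seav (t := .var 2) (x := 3) (e := e2 r) (c := cX)
    [cX, cI] (by simp [e2, eX, Env.lookup])) ?_
  simp [st13, e2, eX, Env.restrict, Term.fv]

lemma step1314 (r : List Bool) : SK (st13 r) (st14 r) :=
  SK.sub (x := 2) (e := .cons 2 (cS r) .nil) [cX, cX, cI] rfl

lemma step1415 : SK (st14 []) st15 :=
  SK.betaw (x := 4) (t := .lam 5 (.lam 6 (.var 6))) (e := .nil) cX [cX, cI] (by decide)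

lemma step1516 : SK st15 st16 :=
  SK.betaw (x := 5) (t := .lam 6 (.var 6)) (e := .nil) cX [cI] (by decide)

lemma step1617 : SK st16 st17 :=
  SK.betanw (x := 6) (t := .var 6) (e := .nil) cI [] (by decide)

lemma step17fin : SK st17 stFin :=
  SK.sub (x := 6) (e := .cons 6 cI .nil) [] rfl

-- false branch
lemma stepF0 (r : List Bool) : SK (st14 (false :: r)) (stF1 r) :=
  SK.betanw (x := 4) (t := .lam 5 (.lam 6 (.app (.var 4) (encStr r)))) (e := .nil)
    cX [cX, cI] (by simp [Term.fv, fv_encStr])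

lemma stepF1 (r : List Bool) : SK (stF1 r) (stF2 r) :=
  SK.betaw (x := 5) (t := .lam 6 (.app (.var 4) (encStr r))) (e := e4)
    cX [cI] (by simp [Term.fv, fv_encStr])

lemma stepF2 (r : List Bool) : SK (stF2 r) (stF3 r) :=
  SK.betaw (x := 6) (t := .app (.var 4) (encStr r)) (e := e4)
    cI [] (by simp [Term.fv, fv_encStr])

lemma stepF3 (r : List Bool) : SK (stF3 r) (stF4 r) := by
  refine SK_eq (SK.seanv (t := .var 4) (u := encStr r) (e := e4) []
    (fun x => encStr_ne_var r x)) ?_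
  simp [stF4, e4, cS, Env.restrict, Term.fv, fv_encStr]

lemma stepF4 (r : List Bool) : SK (stF4 r) (st23 r) :=
  SK.sub (x := 4) (e := e4) [cS r] rfl

-- true branch
lemma stepT0 (r : List Bool) : SK (st14 (true :: r)) (stT1 r) :=
  SK.betaw (x := 4) (t := .lam 5 (.lam 6 (.app (.var 5) (encStr r)))) (e := .nil)
    cX [cX, cI] (by simp [Term.fv, fv_encStr])

lemma stepT1 (r : List Bool) : SK (stT1 r) (stT2 r) :=
  SK.betanw (x := 5) (t := .lam 6 (.app (.var 5) (encStr r))) (e := .nil)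
    cX [cI] (by simp [Term.fv, fv_encStr])

lemma stepT2 (r : List Bool) : SK (stT2 r) (stT3 r) :=
  SK.betaw (x := 6) (t := .app (.var 5) (encStr r)) (e := e5)
    cI [] (by simp [Term.fv, fv_encStr])

lemma stepT3 (r : List Bool) : SK (stT3 r) (stT4 r) := by
  refine SK_eq (SK.seanv (t := .var 5) (u := encStr r) (e := e5) []
    (fun x => encStr_ne_var r x)) ?_
  simp [stT4, e5, cS, Env.restrict, Term.fv, fv_encStr]

lemma stepT4 (r : List Bool) : SK (stT4 r) (st23 r) :=
  SK.sub (x := 5) (e := e5) [cS r] rfl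

lemma step2324 (r : List Bool) : SK (st23 r) (st24 r) := by
  refine SK_eq (SK.seav (t := .app (.var 0) (.var 0)) (x := 1) (e := envA) (c := cA)
    [cS r] (by simp [envA, eTh, Env.lookup])) ?_
  simp [st24, envA, eTh, Env.restrict, Term.fv]

lemma step2425 (r : List Bool) : SK (st24 r) (st25 r) := by
  refine SK_eq (SK.seav (t := .var 0) (x := 0) (e := eTh) (c := cTh)
    [cA, cS r] (by simp [eTh, Env.lookup])) ?_
  simp [st25, eTh, Env.restrict, Term.fv]

lemma step254 (r : List Bool) : SK (st25 r) (st4 r) :=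
  SK.sub (x := 0) (e := eTh) [cTh, cA, cS r] rfl

lemma skfinal_fin : SKFinal stFin := by
  intro s' h
  cases h
/-! ### Runs -/

open Relation

abbrev RTG := Relation.ReflTransGen SK

lemma rtg_step {a b : State} (h : SK a b) : RTG a b := ReflTransGen.single h

lemma run_1_4 (r : List Bool) : RTG (st1 r) (st4 r) :=
  ((rtg_step (step12 r)).tail (step23 r)).tail (step34 r)

lemma run_4_14 (r : List Bool) : RTG (st4 r) (st14 r) :=
  (((((((((rtg_step (step45 r)).tail (step56 r)).tail (step67 r)).tail
    (step78 r)).tail (step89 r)).tail (step910 r)).tail (step1011 r)).tail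
    (step1112 r)).tail (step1213 r)).tail (step1314 r)

lemma run_14_fin : RTG (st14 []) stFin :=
  (((rtg_step step1415).tail step1516).tail step1617).tail step17fin

lemma run_14_4 (b : Bool) (r : List Bool) : RTG (st14 (b :: r)) (st4 r) := by
  cases b
  · exact (((((((rtg_step (stepF0 r)).tail (stepF1 r)).tail (stepF2 r)).tail
      (stepF3 r)).tail (stepF4 r)).tail (step2324 r)).tail (step2425 r)).tail (step254 r)
  · exact (((((((rtg_step (stepT0 r)).tail (stepT1 r)).tail (stepT2 r)).tail
      (stepT3 r)).tail (stepT4 r)).tail (step2324 r)).tail (step2425 r)).tail (step254 r)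

lemma run_4_fin (r : List Bool) : RTG (st4 r) stFin := by
  induction r with
  | nil => exact (run_4_14 []).trans run_14_fin
  | cons b r ih => exact ((run_4_14 (b :: r)).trans (run_14_4 b r)).trans ih

lemma run_init_fin (s : List Bool) : RTG (st1 s) stFin :=
  (run_1_4 s).trans (run_4_fin s)

lemma run_4_drop (p r : List Bool) : RTG (st4 (p ++ r)) (st4 r) := by
  induction p with
  | nil => exact ReflTransGen.refl
  | cons b p ih => exact ((run_4_14 (b :: (p ++ r))).trans (run_14_4 b (p ++ r))).trans ih

lemma nsteps_snoc {a b c : State} {n : ℕ} (h : NSteps SK n a b) (h2 : SK b c) :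
    NSteps SK (n + 1) a c := by
  induction h with
  | refl a => exact NSteps.head h2 (NSteps.refl _)
  | head h1 _ ih => exact NSteps.head h1 (ih h2)

lemma rtg_nsteps {a b : State} (h : RTG a b) : ∃ n, NSteps SK n a b := by
  induction h with
  | refl => exact ⟨0, NSteps.refl _⟩
  | tail _ h2 ih => obtain ⟨n, hn⟩ := ih; exact ⟨n + 1, nsteps_snoc hn h2⟩

/-! ### Determinism -/

lemma SK_det {a b c : State} (h1 : SK a b) (h2 : SK a c) : b = c := by
  cases h1 <;> cases h2 <;> simp_all
/-! ### Invariant -/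

def SKInv (st : State) : Prop :=
  (∃ r, st = st1 r) ∨ (∃ r, st = st2 r) ∨ (∃ r, st = st3 r) ∨ (∃ r, st = st4 r) ∨
  (∃ r, st = st5 r) ∨ (∃ r, st = st6 r) ∨ (∃ r, st = st7 r) ∨ (∃ r, st = st8 r) ∨
  (∃ r, st = st9 r) ∨ (∃ r, st = st10 r) ∨ (∃ r, st = st11 r) ∨ (∃ r, st = st12 r) ∨
  (∃ r, st = st13 r) ∨ (∃ r, st = st14 r) ∨ st = st15 ∨ st = st16 ∨ st = st17 ∨
  st = stFin ∨
  (∃ r, st = stF1 r) ∨ (∃ r, st = stF2 r) ∨ (∃ r, st = stF3 r) ∨ (∃ r, st = stF4 r) ∨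
  (∃ r, st = stT1 r) ∨ (∃ r, st = stT2 r) ∨ (∃ r, st = stT3 r) ∨ (∃ r, st = stT4 r) ∨
  (∃ r, st = st23 r) ∨ (∃ r, st = st24 r) ∨ (∃ r, st = st25 r)

lemma inv_st1 (r : List Bool) : SKInv (st1 r) :=
  Or.inl ⟨r, rfl⟩

lemma inv_st2 (r : List Bool) : SKInv (st2 r) :=
  Or.inr (Or.inl ⟨r, rfl⟩)

lemma inv_st3 (r : List Bool) : SKInv (st3 r) :=
  Or.inr (Or.inr (Or.inl ⟨r, rfl⟩))

lemma inv_st4 (r : List Bool) : SKInv (st4 r) :=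
  Or.inr (Or.inr (Or.inr (Or.inl ⟨r, rfl⟩)))

lemma inv_st5 (r : List Bool) : SKInv (st5 r) :=
  Or.inr (Or.inr (Or.inr (Or.inr (Or.inl ⟨r, rfl⟩))))

lemma inv_st6 (r : List Bool) : SKInv (st6 r) :=
  Or.inr (Or.inr (Or.inr (Or.inr (Or.inr (Or.inl ⟨r, rfl⟩)))))

lemma inv_st7 (r : List Bool) : SKInv (st7 r) :=
  Or.inr (Or.inr (Or.inr (Or.inr (Or.inr (Or.inr (Or.inl ⟨r, rfl⟩))))))

lemma inv_st8 (r : List Bool) : SKInv (st8 r) :=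
  Or.inr (Or.inr (Or.inr (Or.inr (Or.inr (Or.inr (Or.inr (Or.inl ⟨r, rfl⟩)))))))

lemma inv_st9 (r : List Bool) : SKInv (st9 r) :=
  Or.inr (Or.inr (Or.inr (Or.inr (Or.inr (Or.inr (Or.inr (Or.inr (Or.inl ⟨r, rfl⟩))))))))

lemma inv_st10 (r : List Bool) : SKInv (st10 r) :=
  Or.inr (Or.inr (Or.inr (Or.inr (Or.inr (Or.inr (Or.inr (Or.inr (Or.inr (Or.inl ⟨r, rfl⟩)))))))))

lemma inv_st11 (r : List Bool) : SKInv (st11 r) :=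
  Or.inr (Or.inr (Or.inr (Or.inr (Or.inr (Or.inr (Or.inr (Or.inr (Or.inr (Or.inr (Or.inl ⟨r, rfl⟩))))))))))

lemma inv_st12 (r : List Bool) : SKInv (st12 r) :=
  Or.inr (Or.inr (Or.inr (Or.inr (Or.inr (Or.inr (Or.inr (Or.inr (Or.inr (Or.inr (Or.inr (Or.inl ⟨r, rfl⟩)))))))))))

lemma inv_st13 (r : List Bool) : SKInv (st13 r) :=
  Or.inr (Or.inr (Or.inr (Or.inr (Or.inr (Or.inr (Or.inr (Or.inr (Or.inr (Or.inr (Or.inr (Or.inr (Or.inl ⟨r, rfl⟩))))))))))))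

lemma inv_st14 (r : List Bool) : SKInv (st14 r) :=
  Or.inr (Or.inr (Or.inr (Or.inr (Or.inr (Or.inr (Or.inr (Or.inr (Or.inr (Or.inr (Or.inr (Or.inr (Or.inr (Or.inl ⟨r, rfl⟩)))))))))))))

lemma inv_st15 : SKInv (st15) :=
  Or.inr (Or.inr (Or.inr (Or.inr (Or.inr (Or.inr (Or.inr (Or.inr (Or.inr (Or.inr (Or.inr (Or.inr (Or.inr (Or.inr (Or.inl rfl))))))))))))))

lemma inv_st16 : SKInv (st16) :=
  Or.inr (Or.inr (Or.inr (Or.inr (Or.inr (Or.inr (Or.inr (Or.inr (Or.inr (Or.inr (Or.inr (Or.inr (Or.inr (Or.inr (Or.inr (Or.inl rfl)))))))))))))))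

lemma inv_st17 : SKInv (st17) :=
  Or.inr (Or.inr (Or.inr (Or.inr (Or.inr (Or.inr (Or.inr (Or.inr (Or.inr (Or.inr (Or.inr (Or.inr (Or.inr (Or.inr (Or.inr (Or.inr (Or.inl rfl))))))))))))))))

lemma inv_stFin : SKInv (stFin) :=
  Or.inr (Or.inr (Or.inr (Or.inr (Or.inr (Or.inr (Or.inr (Or.inr (Or.inr (Or.inr (Or.inr (Or.inr (Or.inr (Or.inr (Or.inr (Or.inr (Or.inr (Or.inl rfl)))))))))))))))))

lemma inv_stF1 (r : List Bool) : SKInv (stF1 r) :=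
  Or.inr (Or.inr (Or.inr (Or.inr (Or.inr (Or.inr (Or.inr (Or.inr (Or.inr (Or.inr (Or.inr (Or.inr (Or.inr (Or.inr (Or.inr (Or.inr (Or.inr (Or.inr (Or.inl ⟨r, rfl⟩))))))))))))))))))

lemma inv_stF2 (r : List Bool) : SKInv (stF2 r) :=
  Or.inr (Or.inr (Or.inr (Or.inr (Or.inr (Or.inr (Or.inr (Or.inr (Or.inr (Or.inr (Or.inr (Or.inr (Or.inr (Or.inr (Or.inr (Or.inr (Or.inr (Or.inr (Or.inr (Or.inl ⟨r, rfl⟩)))))))))))))))))))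

lemma inv_stF3 (r : List Bool) : SKInv (stF3 r) :=
  Or.inr (Or.inr (Or.inr (Or.inr (Or.inr (Or.inr (Or.inr (Or.inr (Or.inr (Or.inr (Or.inr (Or.inr (Or.inr (Or.inr (Or.inr (Or.inr (Or.inr (Or.inr (Or.inr (Or.inr (Or.inl ⟨r, rfl⟩))))))))))))))))))))

lemma inv_stF4 (r : List Bool) : SKInv (stF4 r) :=
  Or.inr (Or.inr (Or.inr (Or.inr (Or.inr (Or.inr (Or.inr (Or.inr (Or.inr (Or.inr (Or.inr (Or.inr (Or.inr (Or.inr (Or.inr (Or.inr (Or.inr (Or.inr (Or.inr (Or.inr (Or.inr (Or.inl ⟨r, rfl⟩)))))))))))))))))))))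

lemma inv_stT1 (r : List Bool) : SKInv (stT1 r) :=
  Or.inr (Or.inr (Or.inr (Or.inr (Or.inr (Or.inr (Or.inr (Or.inr (Or.inr (Or.inr (Or.inr (Or.inr (Or.inr (Or.inr (Or.inr (Or.inr (Or.inr (Or.inr (Or.inr (Or.inr (Or.inr (Or.inr (Or.inl ⟨r, rfl⟩))))))))))))))))))))))

lemma inv_stT2 (r : List Bool) : SKInv (stT2 r) :=
  Or.inr (Or.inr (Or.inr (Or.inr (Or.inr (Or.inr (Or.inr (Or.inr (Or.inr (Or.inr (Or.inr (Or.inr (Or.inr (Or.inr (Or.inr (Or.inr (Or.inr (Or.inr (Or.inr (Or.inr (Or.inr (Or.inr (Or.inr (Or.inl ⟨r, rfl⟩)))))))))))))))))))))))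

lemma inv_stT3 (r : List Bool) : SKInv (stT3 r) :=
  Or.inr (Or.inr (Or.inr (Or.inr (Or.inr (Or.inr (Or.inr (Or.inr (Or.inr (Or.inr (Or.inr (Or.inr (Or.inr (Or.inr (Or.inr (Or.inr (Or.inr (Or.inr (Or.inr (Or.inr (Or.inr (Or.inr (Or.inr (Or.inr (Or.inl ⟨r, rfl⟩))))))))))))))))))))))))

lemma inv_stT4 (r : List Bool) : SKInv (stT4 r) :=
  Or.inr (Or.inr (Or.inr (Or.inr (Or.inr (Or.inr (Or.inr (Or.inr (Or.inr (Or.inr (Or.inr (Or.inr (Or.inr (Or.inr (Or.inr (Or.inr (Or.inr (Or.inr (Or.inr (Or.inr (Or.inr (Or.inr (Or.inr (Or.inr (Or.inr (Or.inl ⟨r, rfl⟩)))))))))))))))))))))))))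

lemma inv_st23 (r : List Bool) : SKInv (st23 r) :=
  Or.inr (Or.inr (Or.inr (Or.inr (Or.inr (Or.inr (Or.inr (Or.inr (Or.inr (Or.inr (Or.inr (Or.inr (Or.inr (Or.inr (Or.inr (Or.inr (Or.inr (Or.inr (Or.inr (Or.inr (Or.inr (Or.inr (Or.inr (Or.inr (Or.inr (Or.inr (Or.inl ⟨r, rfl⟩))))))))))))))))))))))))))

lemma inv_st24 (r : List Bool) : SKInv (st24 r) :=
  Or.inr (Or.inr (Or.inr (Or.inr (Or.inr (Or.inr (Or.inr (Or.inr (Or.inr (Or.inr (Or.inr (Or.inr (Or.inr (Or.inr (Or.inr (Or.inr (Or.inr (Or.inr (Or.inr (Or.inr (Or.inr (Or.inr (Or.inr (Or.inr (Or.inr (Or.inr (Or.inr (Or.inl ⟨r, rfl⟩)))))))))))))))))))))))))))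

lemma inv_st25 (r : List Bool) : SKInv (st25 r) :=
  Or.inr (Or.inr (Or.inr (Or.inr (Or.inr (Or.inr (Or.inr (Or.inr (Or.inr (Or.inr (Or.inr (Or.inr (Or.inr (Or.inr (Or.inr (Or.inr (Or.inr (Or.inr (Or.inr (Or.inr (Or.inr (Or.inr (Or.inr (Or.inr (Or.inr (Or.inr (Or.inr (Or.inr (⟨r, rfl⟩))))))))))))))))))))))))))))
lemma inv_preserved {st st' : State} (h : SKInv st) (hs : SK st st') : SKInv st' := by
  unfold SKInv at h
  rcases h with ⟨r,rfl⟩|⟨r,rfl⟩|⟨r,rfl⟩|⟨r,rfl⟩|⟨r,rfl⟩|⟨r,rfl⟩|⟨r,rfl⟩|⟨r,rfl⟩|⟨r,rfl⟩|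
    ⟨r,rfl⟩|⟨r,rfl⟩|⟨r,rfl⟩|⟨r,rfl⟩|⟨r,rfl⟩|rfl|rfl|rfl|rfl|⟨r,rfl⟩|⟨r,rfl⟩|⟨r,rfl⟩|
    ⟨r,rfl⟩|⟨r,rfl⟩|⟨r,rfl⟩|⟨r,rfl⟩|⟨r,rfl⟩|⟨r,rfl⟩|⟨r,rfl⟩|⟨r,rfl⟩
  · rw [SK_det hs (step12 r)]; exact inv_st2 r
  · rw [SK_det hs (step23 r)]; exact inv_st3 r
  · rw [SK_det hs (step34 r)]; exact inv_st4 r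
  · rw [SK_det hs (step45 r)]; exact inv_st5 r
  · rw [SK_det hs (step56 r)]; exact inv_st6 r
  · rw [SK_det hs (step67 r)]; exact inv_st7 r
  · rw [SK_det hs (step78 r)]; exact inv_st8 r
  · rw [SK_det hs (step89 r)]; exact inv_st9 r
  · rw [SK_det hs (step910 r)]; exact inv_st10 r
  · rw [SK_det hs (step1011 r)]; exact inv_st11 r
  · rw [SK_det hs (step1112 r)]; exact inv_st12 r
  · rw [SK_det hs (step1213 r)]; exact inv_st13 r
  · rw [SK_det hs (step1314 r)]; exact inv_st14 r
  · match r with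
    | [] => rw [SK_det hs step1415]; exact inv_st15
    | false :: r => rw [SK_det hs (stepF0 r)]; exact inv_stF1 r
    | true :: r => rw [SK_det hs (stepT0 r)]; exact inv_stT1 r
  · rw [SK_det hs step1516]; exact inv_st16
  · rw [SK_det hs step1617]; exact inv_st17
  · rw [SK_det hs step17fin]; exact inv_stFin
  · exact absurd hs (skfinal_fin st')
  · rw [SK_det hs (stepF1 r)]; exact inv_stF2 r
  · rw [SK_det hs (stepF2 r)]; exact inv_stF3 r
  · rw [SK_det hs (stepF3 r)]; exact inv_stF4 r
  · rw [SK_det hs (stepF4 r)]; exact inv_st23 r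
  · rw [SK_det hs (stepT1 r)]; exact inv_stT2 r
  · rw [SK_det hs (stepT2 r)]; exact inv_stT3 r
  · rw [SK_det hs (stepT3 r)]; exact inv_stT4 r
  · rw [SK_det hs (stepT4 r)]; exact inv_st23 r
  · rw [SK_det hs (step2324 r)]; exact inv_st24 r
  · rw [SK_det hs (step2425 r)]; exact inv_st25 r
  · rw [SK_det hs (step254 r)]; exact inv_st4 r

lemma inv_reached {s : List Bool} {st : State} (h : RTG (st1 s) st) : SKInv st := by
  induction h with
  | refl => exact inv_st1 s
  | tail _ h2 ih => exact inv_preserved ih h2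
/-! ### Size bounds -/

def Bnd (t0 : Term) : ℕ := Nat.size t0.inorder.length

lemma addr_le (t0 u : Term) : addrSize t0 u ≤ Bnd t0 :=
  Nat.size_le_size List.idxOf_le_length

mutual
theorem clo_size_le (t0 : Term) : (c : Clo) → Clo.size t0 c + Bnd t0 ≤ 2 * Clo.count c * Bnd t0
  | .mk t e => by
      have h1 := addr_le t0 t
      have h2 := env_size_le t0 e
      simp only [Clo.size, Clo.count]
      calc addrSize t0 t + Env.sizeE t0 e + Bnd t0
          ≤ Bnd t0 + 2 * Env.count e * Bnd t0 + Bnd t0 := by omega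
        _ = 2 * (1 + Env.count e) * Bnd t0 := by ring
theorem env_size_le (t0 : Term) : (e : Env) → Env.sizeE t0 e ≤ 2 * Env.count e * Bnd t0
  | .nil => by simp [Env.sizeE]
  | .cons x c e => by
      have h1 := addr_le t0 (.var x)
      have h2 := clo_size_le t0 c
      have h3 := env_size_le t0 e
      simp only [Env.sizeE, Env.count]
      have : 2 * (Clo.count c + Env.count e) * Bnd t0
          = 2 * Clo.count c * Bnd t0 + 2 * Env.count e * Bnd t0 := by ring
      omega
end

lemma stack_size_le (t0 : Term) (S : List Clo) :
    stackSize t0 S ≤ 2 * (S.map Clo.count).sum * Bnd t0 := by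
  induction S with
  | nil => simp [stackSize]
  | cons c S ih =>
      have h2 := clo_size_le t0 c
      simp only [stackSize, List.map_cons, List.sum_cons] at *
      have : 2 * (Clo.count c + (S.map Clo.count).sum) * Bnd t0
          = 2 * Clo.count c * Bnd t0 + 2 * (S.map Clo.count).sum * Bnd t0 := by ring
      omega

lemma state_size_le (t0 : Term) (st : State) :
    st.size t0 ≤ (1 + 2 * (Env.count st.env + (st.stk.map Clo.count).sum)) * Bnd t0 := by
  have h1 := addr_le t0 st.tm
  have h2 := env_size_le t0 st.env
  have h3 := stack_size_le t0 st.stk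
  simp only [State.size]
  have : (1 + 2 * (Env.count st.env + (st.stk.map Clo.count).sum)) * Bnd t0
      = Bnd t0 + 2 * Env.count st.env * Bnd t0 + 2 * (st.stk.map Clo.count).sum * Bnd t0 := by
    ring
  omega

lemma inv_size_le (t0 : Term) {st : State} (h : SKInv st) : st.size t0 ≤ 17 * Bnd t0 := by
  unfold SKInv at h
  rcases h with ⟨r,rfl⟩|⟨r,rfl⟩|⟨r,rfl⟩|⟨r,rfl⟩|⟨r,rfl⟩|⟨r,rfl⟩|⟨r,rfl⟩|⟨r,rfl⟩|⟨r,rfl⟩|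
    ⟨r,rfl⟩|⟨r,rfl⟩|⟨r,rfl⟩|⟨r,rfl⟩|⟨r,rfl⟩|rfl|rfl|rfl|rfl|⟨r,rfl⟩|⟨r,rfl⟩|⟨r,rfl⟩|
    ⟨r,rfl⟩|⟨r,rfl⟩|⟨r,rfl⟩|⟨r,rfl⟩|⟨r,rfl⟩|⟨r,rfl⟩|⟨r,rfl⟩|⟨r,rfl⟩ <;>
  · refine le_trans (state_size_le t0 _) (Nat.mul_le_mul_right _ ?_)
    simp [st1, st2, st3, st4, st5, st6, st7, st8, st9, st10, st11, st12, st13, st14,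
      st15, st16, st17, stFin, stF1, stF2, stF3, stF4, stT1, stT2, stT3, stT4,
      st23, st24, st25, cTh, cA, cX, cI, cS, eTh, envA, eX, e2, e4, e5,
      Env.count, Clo.count]
/-! ### Length of the in-order enumeration -/

lemma inorder_len_enc (r : List Bool) : (encStr r).inorder.length = 5 * r.length + 4 := by
  induction r with
  | nil => decide
  | cons b r ih =>
      simp [encStr, Term.inorder, ih]
      ring

lemma inorder_len_code (s : List Bool) :
    (Term.app tmToy (encStr s)).inorder.length = 35 + 5 * s.length := by
  have h30 : tmToy.inorder.length = 30 := by decide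
  simp [Term.inorder, h30, inorder_len_enc]
  ring

lemma bnd_le (s : List Bool) :
    Bnd (Term.app tmToy (encStr s)) ≤ Nat.log 2 s.length + 7 := by
  unfold Bnd
  rw [inorder_len_code, Nat.size_le]
  rcases Nat.eq_zero_or_pos s.length with h | h
  · simp [h]
  · have h1 : s.length < 2 ^ (Nat.log 2 s.length + 1) :=
      Nat.lt_pow_succ_log_self (by norm_num) s.length
    have h2 : 1 ≤ 2 ^ Nat.log 2 s.length := Nat.one_le_two_pow
    have e1 : 2 ^ (Nat.log 2 s.length + 1) = 2 ^ Nat.log 2 s.length * 2 := by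
      rw [pow_succ]
    have e2 : 2 ^ (Nat.log 2 s.length + 7) = 2 ^ Nat.log 2 s.length * 128 := by
      rw [pow_add]; norm_num
    omega

/-- Upper bound on the size of every reachable state. -/
lemma upper_bound (s : List Bool) (st : State)
    (h : Relation.ReflTransGen SK (st1 s) st) :
    st.size (Term.app tmToy (encStr s)) ≤ 119 * (Nat.log 2 s.length + 1) := by
  have h1 := inv_size_le (Term.app tmToy (encStr s)) (inv_reached h)
  have h2 := bnd_le s
  nlinarith [Nat.log 2 s.length]
/-! ### Lower bound -/

lemma encStr_inj : ∀ a b, encStr a = encStr b → a = b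
  | [], [], _ => rfl
  | [], _ :: _, h => by simp [encStr] at h
  | _ :: _, [], h => by simp [encStr] at h
  | a :: q, b :: r, h => by
      cases a <;> cases b <;> simp [encStr] at h ⊢ <;> exact encStr_inj q r h

lemma encStr_shape (r : List Bool) : ∃ t, encStr r = .lam 4 t := by
  cases r <;> exact ⟨_, rfl⟩

lemma idx_enc : ∀ (i : ℕ) (s : List Bool), i ≤ s.length →
    ((encStr s).inorder).idxOf (encStr (s.drop i)) = 5 * i := by
  intro i
  induction i with
  | zero =>
      intro s _
      simp only [List.drop_zero]
      cases s <;> simp [encStr, Term.inorder]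
  | succ i ih =>
      intro s hle
      match s with
      | b :: r =>
        have hlen : i ≤ r.length := by simpa using hle
        have ha := ih r hlen
        have hdrop : (b :: r).drop (i + 1) = r.drop i := rfl
        obtain ⟨t, ht⟩ := encStr_shape (r.drop i)
        have hlist : (encStr (b :: r)).inorder =
            encStr (b :: r) ::
            Term.lam 5 (Term.lam 6 (.app (.var (if b then 5 else 4)) (encStr r))) ::
            Term.lam 6 (.app (.var (if b then 5 else 4)) (encStr r)) ::
            Term.var (if b then 5 else 4) ::
            Term.app (.var (if b then 5 else 4)) (encStr r) ::
            (encStr r).inorder := by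
          cases b <;> rfl
        have ne1 : encStr (b :: r) ≠ encStr (r.drop i) := by
          intro h
          have := encStr_inj _ _ h
          apply_fun List.length at this
          simp [List.length_drop] at this
          omega
        rw [hdrop, hlist]
        rw [List.idxOf_cons_ne _ ne1]
        rw [List.idxOf_cons_ne _ (by rw [ht]; simp)]
        rw [List.idxOf_cons_ne _ (by rw [ht]; simp)]
        rw [List.idxOf_cons_ne _ (by rw [ht]; simp)]
        rw [List.idxOf_cons_ne _ (by rw [ht]; simp)]
        rw [ha]
        omega

def isLam4 : Term → Bool
  | .lam 4 _ => true
  | _ => false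

lemma toy_no_lam4 : ∀ u ∈ tmToy.inorder, isLam4 u = false := by decide

lemma isLam4_enc (r : List Bool) : isLam4 (encStr r) = true := by
  cases r <;> rfl

lemma enc_not_mem_toy (r : List Bool) : encStr r ∉ tmToy.inorder := by
  intro h
  have := toy_no_lam4 _ h
  rw [isLam4_enc] at this
  exact Bool.noConfusion this

lemma idx_code (s : List Bool) (i : ℕ) (h : i ≤ s.length) :
    ((Term.app tmToy (encStr s)).inorder).idxOf (encStr (s.drop i)) = 31 + 5 * i := by
  have hsplit : (Term.app tmToy (encStr s)).inorder =
      tmToy.inorder ++ (Term.app tmToy (encStr s) :: (encStr s).inorder) := rfl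
  rw [hsplit, List.idxOf_append_of_notMem (enc_not_mem_toy _)]
  obtain ⟨t, ht⟩ := encStr_shape (s.drop i)
  rw [List.idxOf_cons_ne _ (by rw [ht]; simp)]
  rw [idx_enc i s h]
  have h30 : tmToy.inorder.length = 30 := by decide
  rw [h30]
  omega

lemma lower_bound (s : List Bool) (h2 : 2 ≤ s.length) :
    ∃ st : State, Relation.ReflTransGen SK (st1 s) st ∧
      Nat.log 2 s.length ≤ st.size (Term.app tmToy (encStr s)) := by
  set i := s.length - 1
  refine ⟨st14 (s.drop i), ?_, ?_⟩
  · have hsplit : s.take i ++ s.drop i = s := List.take_append_drop i s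
    have h1 : Relation.ReflTransGen SK (st4 s) (st4 (s.drop i)) := by
      have := run_4_drop (s.take i) (s.drop i)
      rwa [hsplit] at this
    exact ((run_1_4 s).trans h1).trans (run_4_14 _)
  · have hidx := idx_code s i (by omega)
    have haddr : addrSize (Term.app tmToy (encStr s)) (encStr (s.drop i))
        = Nat.size (31 + 5 * i) := by rw [addrSize, hidx]
    have hlog : Nat.log 2 s.length < Nat.size (31 + 5 * i) := by
      rw [Nat.lt_size]
      have hp : 2 ^ Nat.log 2 s.length ≤ s.length :=
        Nat.pow_log_le_self 2 (by omega)
      omega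
    have hsize : addrSize (Term.app tmToy (encStr s)) (encStr (s.drop i))
        ≤ (st14 (s.drop i)).size (Term.app tmToy (encStr s)) := by
      simp [st14, State.size]
      omega
    omega
/-- the Space KAM evaluates `toy ⟨s⟩` completely to `(I, ε, ε)`
in space `Θ(log |s|)` (sizes relative to the initial code `toy ⟨s⟩`). -/
theorem space_kam_toy_log_space :
    (∀ s : List Bool, ∃ m : ℕ,
      NSteps SK m (initState (.app tmToy (encStr s))) ⟨tmI, .nil, []⟩ ∧
      SKFinal ⟨tmI, .nil, []⟩) ∧
    (∃ k2 : ℕ, 0 < k2 ∧ ∀ (s : List Bool) (st : State),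
      Relation.ReflTransGen SK (initState (.app tmToy (encStr s))) st →
      st.size (.app tmToy (encStr s)) ≤ k2 * (Nat.log 2 s.length + 1)) ∧
    (∃ k1 : ℕ, 0 < k1 ∧ ∀ s : List Bool, 2 ≤ s.length → ∃ st : State,
      Relation.ReflTransGen SK (initState (.app tmToy (encStr s))) st ∧
      Nat.log 2 s.length ≤ k1 * st.size (.app tmToy (encStr s))) := by
  refine ⟨?_, ⟨119, by norm_num, ?_⟩, ⟨1, one_pos, ?_⟩⟩
  · intro s
    obtain ⟨m, hm⟩ := rtg_nsteps (run_init_fin s)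
    exact ⟨m, hm, skfinal_fin⟩
  · intro s st h
    exact upper_bound s st h
  · intro s h2
    obtain ⟨st, h, hl⟩ := lower_bound s h2
    exact ⟨st, h, by simpa using hl⟩
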